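/- Let d ≥ 1 and order ℕ^d componentwise. Then the set Idl(ℕ^d) of ideals of ℕ^d, partially ordered by inclusion (strict inclusion is well-founded since Idl(ℕ^d) is well-quasi-ordered by inclusion), has ordinal rank rk(Idl(ℕ^d)) = ω·d + 1. -/

import Mathlib

/-- A subset is downwards-closed if it is closed under going down. -/
def DownwardsClosed {X : Type*} [Preorder X] (D : Set X) : Prop :=
  ∀ ⦃x y : X⦄, x ≤ y → y ∈ D → x ∈ D

/-- An ideal is a nonempty, directed, downwards-closed subset. -/
def IsIdeal {X : Type*} [Preorder X] (I : Set X) : Prop :=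
  I.Nonempty ∧ DownwardsClosed I ∧
    ∀ ⦃x⦄, x ∈ I → ∀ ⦃y⦄, y ∈ I → ∃ z ∈ I, x ≤ z ∧ y ≤ z

/-- The set of ideals of `X`, partially ordered by inclusion. -/
def Idl (X : Type*) [Preorder X] : Type _ := {I : Set X // IsIdeal I}

noncomputable instance (X : Type*) [Preorder X] : PartialOrder (Idl X) :=
  Subtype.partialOrder _

/-- The ordinal rank of an element of a preorder: `rk z = sup {rk y + 1 : y < z}`
when the strict order is well-founded (and `0` otherwise, by convention). -/
noncomputable def rk {Z : Type*} [Preorder Z] (z : Z) : Ordinal :=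
  @dite _ (WellFounded ((· < ·) : Z → Z → Prop)) (Classical.dec _)
    (fun h => (h.apply z).rank) (fun _ => 0)

section Aux
open Ordinal

variable {d : ℕ}

/-- The down-set of a vector in `(ℕ∞)^d`. -/
def idealSet (v : Fin d → ℕ∞) : Set (Fin d → ℕ) := {x | ∀ i, (x i : ℕ∞) ≤ v i}

lemma isIdeal_idealSet (v : Fin d → ℕ∞) : IsIdeal (idealSet v) := by
  refine ⟨⟨0, fun i => ?_⟩, fun x y hxy hy i => ?_, fun x hx y hy =>
    ⟨x ⊔ y, fun i => ?_, le_sup_left, le_sup_right⟩⟩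
  · simp
  · exact le_trans (by exact_mod_cast hxy i) (hy i)
  · rw [Pi.sup_apply]
    rcases le_total (x i) (y i) with h | h
    · rw [sup_eq_right.mpr h]; exact hy i
    · rw [sup_eq_left.mpr h]; exact hx i

lemma idealSet_mono {v w : Fin d → ℕ∞} (h : v ≤ w) : idealSet v ⊆ idealSet w :=
  fun x hx i => (hx i).trans (h i)

/-- Upper bounds of finite families in ideals. -/
lemma exists_ub {X : Type*} [Preorder X] {I : Set X} (hI : IsIdeal I) :
    ∀ (m : ℕ) (f : Fin m → X), (∀ j, f j ∈ I) → ∃ z ∈ I, ∀ j, f j ≤ z := by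
  intro m
  induction m with
  | zero =>
    intro f _
    obtain ⟨z, hz⟩ := hI.1
    exact ⟨z, hz, fun j => j.elim0⟩
  | succ m ih =>
    intro f hf
    obtain ⟨z, hz, hz2⟩ := ih (fun j => f j.castSucc) (fun j => hf _)
    obtain ⟨w, hw, hw1, hw2⟩ := hI.2.2 hz (hf (Fin.last m))
    refine ⟨w, hw, fun j => ?_⟩
    exact Fin.lastCases (motive := fun j => f j ≤ w) hw2
      (fun i => (hz2 i).trans hw1) j

/-- The coordinatewise valuation of an ideal. -/
noncomputable def val (I : Idl (Fin d → ℕ)) (i : Fin d) : ℕ∞ :=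
  ⨆ x ∈ I.1, (x i : ℕ∞)

lemma le_val {I : Idl (Fin d → ℕ)} {x : Fin d → ℕ} (hx : x ∈ I.1) (i : Fin d) :
    (x i : ℕ∞) ≤ val I i :=
  le_iSup₂ (f := fun (x : Fin d → ℕ) (_ : x ∈ I.1) => (x i : ℕ∞)) x hx

lemma exists_ge {I : Idl (Fin d → ℕ)} {n : ℕ} {i : Fin d}
    (hn : (n : ℕ∞) ≤ val I i) : ∃ y ∈ I.1, n ≤ y i := by
  by_contra h
  push_neg at h
  have hlt : ∀ y ∈ I.1, y i < n := fun y hy => h y hy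
  cases n with
  | zero =>
    obtain ⟨z, hz⟩ := I.2.1
    exact Nat.not_lt_zero _ (hlt z hz)
  | succ m =>
    have h1 : val I i ≤ (m : ℕ∞) := by
      refine iSup₂_le fun y hy => ?_
      exact_mod_cast Nat.lt_succ_iff.mp (hlt y hy)
    have h2 : ((m + 1 : ℕ) : ℕ∞) ≤ (m : ℕ∞) := hn.trans h1
    exact absurd (by exact_mod_cast h2) (by omega)

/-- Every ideal is the down-set of its valuation. -/
lemma rep (I : Idl (Fin d → ℕ)) : I.1 = idealSet (val I) := by
  apply Set.Subset.antisymm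
  · exact fun x hx i => le_val hx i
  · intro x hx
    choose y hy1 hy2 using fun i => exists_ge (hx i)
    obtain ⟨z, hz, hz2⟩ := exists_ub I.2 d y hy1
    exact I.2.2.1 (fun i => (hy2 i).trans (hz2 i i)) hz

lemma val_mono {I J : Idl (Fin d → ℕ)} (h : I ≤ J) : val I ≤ val J := by
  intro i
  exact iSup₂_le fun x hx => le_val (h hx) i

lemma val_inj {I J : Idl (Fin d → ℕ)} (h : val I = val J) : I = J :=
  Subtype.ext (by rw [rep I, rep J, h])

/-- Number of infinite coordinates. -/
def topCount (v : Fin d → ℕ∞) : ℕ :=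
  (Finset.univ.filter (fun i => v i = ⊤)).card

/-- Sum of the finite coordinates. -/
def finSum (v : Fin d → ℕ∞) : ℕ := ∑ i, WithTop.untopD 0 (v i)

/-- The ordinal valuation of a vector. -/
noncomputable def gOrd (v : Fin d → ℕ∞) : Ordinal.{0} :=
  omega0 * topCount v + finSum v

lemma topCount_le (v : Fin d → ℕ∞) : topCount v ≤ d := by
  simpa [topCount] using Finset.card_filter_le Finset.univ (fun i => v i = ⊤)

lemma gOrd_le (v : Fin d → ℕ∞) : gOrd v ≤ omega0 * d := by
  rcases eq_or_lt_of_le (topCount_le v) with h | h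
  · have hfull : Finset.univ.filter (fun i => v i = ⊤) = Finset.univ := by
      apply Finset.eq_of_subset_of_card_le (Finset.filter_subset _ _)
      rw [Finset.card_univ, Fintype.card_fin]
      exact h.ge
    have hall : ∀ i, v i = ⊤ := by
      intro i
      have h2 : i ∈ Finset.univ.filter (fun i => v i = ⊤) := by
        rw [hfull]; exact Finset.mem_univ i
      simpa using h2
    have h0 : finSum v = 0 := by simp [finSum, hall]; exact Or.inr rfl
    rw [gOrd, h0, h]
    simp
  · have h1 : gOrd v < omega0 * ((topCount v : ℕ) + 1 : ℕ) := by
      rw [gOrd, Nat.cast_add_one, add_one_eq_succ, mul_succ]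
      exact add_lt_add_right (nat_lt_omega0 _) _
    refine h1.le.trans (mul_le_mul_right ?_ _)
    exact_mod_cast Nat.succ_le_of_lt h

lemma gOrd_strict {v w : Fin d → ℕ∞} (hle : v ≤ w) (hne : v ≠ w) :
    gOrd v < gOrd w := by
  set Sv := Finset.univ.filter (fun i => v i = ⊤) with hSv
  set Sw := Finset.univ.filter (fun i => w i = ⊤) with hSw
  have hsub : Sv ⊆ Sw := by
    intro i hi
    simp only [hSv, hSw, Finset.mem_filter, Finset.mem_univ, true_and] at *
    exact top_le_iff.mp (hi ▸ hle i)
  rcases eq_or_lt_of_le (Finset.card_le_card hsub) with hc | hc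
  · have hS : Sv = Sw := Finset.eq_of_subset_of_card_le hsub hc.ge
    have htop : ∀ i, v i = ⊤ ↔ w i = ⊤ := by
      intro i
      constructor
      · intro h; exact top_le_iff.mp (h ▸ hle i)
      · intro h
        have h2 : i ∈ Sv := hS ▸ (by simp [hSw, h])
        simpa [hSv] using h2
    have hsum : finSum v < finSum w := by
      obtain ⟨i₀, hi₀⟩ : ∃ i, v i ≠ w i := by
        by_contra h; push_neg at h; exact hne (funext h)
      refine Finset.sum_lt_sum (fun i _ => ?_) ⟨i₀, Finset.mem_univ _, ?_⟩
      · rcases eq_or_ne (v i) ⊤ with h | h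
        · simp [h, (htop i).mp h]
        · have h2 : w i ≠ ⊤ := fun ht => h ((htop i).mpr ht)
          obtain ⟨a, ha⟩ := WithTop.ne_top_iff_exists.mp h
          obtain ⟨b, hb⟩ := WithTop.ne_top_iff_exists.mp h2
          have h3 := hle i
          rw [← ha, ← hb] at h3 ⊢
          simp only [WithTop.untopD_coe]
          exact WithTop.coe_le_coe.mp h3
      · have hvt : v i₀ ≠ ⊤ := fun h => hi₀ (h.trans ((htop i₀).mp h).symm)
        have hwt : w i₀ ≠ ⊤ := fun h => hvt ((htop i₀).mpr h)
        obtain ⟨a, ha⟩ := WithTop.ne_top_iff_exists.mp hvt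
        obtain ⟨b, hb⟩ := WithTop.ne_top_iff_exists.mp hwt
        have h1 : v i₀ < w i₀ := lt_of_le_of_ne (hle i₀) hi₀
        rw [← ha, ← hb] at h1 ⊢
        simp only [WithTop.untopD_coe]
        exact WithTop.coe_lt_coe.mp h1
    show omega0 * (Sv.card : ℕ) + (finSum v : Ordinal) <
      omega0 * (Sw.card : ℕ) + (finSum w : Ordinal)
    rw [← hc]
    exact add_lt_add_right (by exact_mod_cast hsum) _
  · have h1 : gOrd v < omega0 * ((topCount v : ℕ) + 1 : ℕ) := by
      rw [gOrd, Nat.cast_add_one, add_one_eq_succ, mul_succ]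
      exact add_lt_add_right (nat_lt_omega0 _) _
    refine h1.trans_le (le_trans (mul_le_mul_right ?_ _) (le_add_right le_rfl))
    exact_mod_cast Nat.succ_le_of_lt hc

/-- The strictly monotone ordinal valuation of ideals. -/
noncomputable def g (I : Idl (Fin d → ℕ)) : Ordinal.{0} := gOrd (val I)

lemma g_strict {I J : Idl (Fin d → ℕ)} (h : I < J) : g I < g J :=
  gOrd_strict (val_mono h.le) (fun he => h.ne (val_inj he))

lemma wfIdl : WellFounded ((· < ·) : Idl (Fin d → ℕ) → Idl (Fin d → ℕ) → Prop) :=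
  Subrelation.wf (r := InvImage (· < ·) g) (fun h => g_strict h)
    (InvImage.wf g Ordinal.lt_wf)

/-- Rank within the ideals. -/
noncomputable def rnk (I : Idl (Fin d → ℕ)) : Ordinal.{0} :=
  ((wfIdl).apply I).rank

lemma rk_eq_rnk (I : Idl (Fin d → ℕ)) : rk I = rnk I := by
  unfold rk
  rw [dif_pos wfIdl]
  rfl

lemma rnk_lt {I J : Idl (Fin d → ℕ)} (h : I < J) : rnk I < rnk J :=
  Acc.rank_lt_of_rel _ h

lemma rnk_le_g (I : Idl (Fin d → ℕ)) : rnk I ≤ g I := by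
  induction I using wfIdl.induction with
  | _ I ih =>
    show ((wfIdl).apply I).rank ≤ g I
    rw [Acc.rank_eq]
    apply Ordinal.iSup_le
    rintro ⟨J, hJ⟩
    rw [Order.succ_le_iff]
    exact lt_of_le_of_lt (ih J hJ) (g_strict hJ)

/-- The chain of vectors used for the lower bound. -/
def vkn (d k n : ℕ) : Fin d → ℕ∞ := fun i =>
  if (i : ℕ) < k then ⊤ else if (i : ℕ) = k then (n : ℕ∞) else 0

noncomputable def Ikn (d k n : ℕ) : Idl (Fin d → ℕ) :=
  ⟨idealSet (vkn d k n), isIdeal_idealSet _⟩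

lemma not_mem_aux {k n : ℕ} (hk : k < d) :
    (fun i : Fin d => if (i : ℕ) = k then n + 1 else 0) ∉ (Ikn d k n).1 := by
  intro h
  have h2 : ((if (k : ℕ) = k then n + 1 else 0 : ℕ) : ℕ∞) ≤
      (if k < k then ⊤ else if k = k then (n : ℕ∞) else 0) := h ⟨k, hk⟩
  rw [if_pos rfl, if_neg (lt_irrefl k), if_pos rfl] at h2
  have h3 : n + 1 ≤ n := by exact_mod_cast h2
  omega

lemma Ikn_lt_succ {k n : ℕ} (hk : k < d) : Ikn d k n < Ikn d k (n + 1) := by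
  rw [lt_iff_le_and_ne]
  constructor
  · apply idealSet_mono
    intro i
    unfold vkn
    split_ifs with h1 h2
    · exact le_rfl
    · exact Nat.mono_cast (Nat.le_succ n)
    · exact le_rfl
  · intro he
    apply not_mem_aux (n := n) hk
    rw [congrArg Subtype.val he]
    intro i
    by_cases h1 : (i : ℕ) = k
    · have h1' : ¬ (i : ℕ) < k := by omega
      simp [vkn, h1, h1']
    · simp only [if_neg h1, Nat.cast_zero]
      exact zero_le

lemma Ikn_lt_next {k n : ℕ} (hk : k < d) : Ikn d k n < Ikn d (k + 1) 0 := by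
  rw [lt_iff_le_and_ne]
  constructor
  · apply idealSet_mono
    intro i
    by_cases h1 : (i : ℕ) < k
    · have h1' : (i : ℕ) < k + 1 := by omega
      simp [vkn, h1, h1']
    · by_cases h2 : (i : ℕ) = k
      · have h1' : (i : ℕ) < k + 1 := by omega
        simp [vkn, h1, h2, h1']
      · simp only [vkn, if_neg h1, if_neg h2]
        exact zero_le
  · intro he
    apply not_mem_aux (n := n) hk
    rw [congrArg Subtype.val he]
    intro i
    by_cases h1 : (i : ℕ) = k
    · have h1' : (i : ℕ) < k + 1 := by omega
      simp [vkn, h1']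
    · simp only [if_neg h1, Nat.cast_zero]
      exact zero_le

lemma lb_M {k : ℕ} (hk : k < d) (hL : omega0 * k ≤ rnk (Ikn d k 0)) :
    ∀ n : ℕ, omega0 * k + n ≤ rnk (Ikn d k n) := by
  intro n
  induction n with
  | zero => simpa using hL
  | succ n ih =>
    have h1 : omega0 * k + n < rnk (Ikn d k (n + 1)) :=
      lt_of_le_of_lt ih (rnk_lt (Ikn_lt_succ hk))
    rw [Nat.cast_add_one, ← add_assoc, add_one_eq_succ, Order.succ_le_iff]
    exact h1

lemma lb_L : ∀ k ≤ d, omega0 * k ≤ rnk (Ikn d k 0) := by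
  intro k
  induction k with
  | zero => intro _; simp
  | succ k ih =>
    intro hk
    have hkd : k < d := hk
    have hM := lb_M hkd (ih (le_of_lt hkd))
    rw [Nat.cast_add_one, mul_add, mul_one, add_le_iff_of_isSuccLimit isSuccLimit_omega0]
    intro b hb
    obtain ⟨n, rfl⟩ := lt_omega0.mp hb
    exact le_of_lt (lt_of_le_of_lt (hM n) (rnk_lt (Ikn_lt_next hkd)))

lemma Ikn_top (I : Idl (Fin d → ℕ)) : I ≤ Ikn d d 0 := by
  intro x _ i
  simp [vkn, i.isLt]

end Aux

open Ordinal in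
/-- For `d ≥ 1`, the rank of the set of ideals of `ℕ^d` (ordered componentwise)
ordered by inclusion is `ω·d + 1`. -/
theorem rank_ideals_nat_pow (d : ℕ) (hd : 1 ≤ d) :
    (⨆ I : Idl (Fin d → ℕ), Order.succ (rk I)) =
      Ordinal.omega0 * d + 1 := by
  have htop : rnk (Ikn d d 0) = omega0 * d := by
    apply le_antisymm
    · exact (rnk_le_g _).trans (gOrd_le _)
    · exact lb_L d le_rfl
  apply le_antisymm
  · apply Ordinal.iSup_le
    intro I
    rw [rk_eq_rnk]
    have h1 : rnk I ≤ omega0 * d := by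
      rcases eq_or_lt_of_le (Ikn_top I) with h | h
      · rw [h]; exact htop.le
      · exact le_of_lt (htop ▸ rnk_lt h)
    rw [add_one_eq_succ]
    exact Order.succ_le_succ h1
  · have h2 := Ordinal.le_iSup (fun I : Idl (Fin d → ℕ) => Order.succ (rk I)) (Ikn d d 0)
    rw [rk_eq_rnk, htop] at h2
    rw [add_one_eq_succ]
    exact h2
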